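/- Let V₁ and V₂ be commuting isometries on a complex Hilbert space H, V := V₁V₂, and C := I − V₁V₁* − V₂V₂* + VV*. If C is compact and semidefinite (C ≤ 0 or C ≥ 0), then C has finite rank, i.e., ran C is a finite-dimensional subspace of H. -/

import Mathlib

open ContinuousLinearMap
open scoped InnerProductSpace

section Aux

variable {H : Type*} [NormedAddCommGroup H] [InnerProductSpace ℂ H] [CompleteSpace H]

omit [CompleteSpace H] in
/-- A compact idempotent operator has finite-dimensional range. -/
lemma aux_finrank_of_compact_idem (E : H →L[ℂ] H) (hc : IsCompactOperator ⇑E)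
    (hidem : ∀ x, E (E x) = E x) :
    FiniteDimensional ℂ ↥(LinearMap.range (E : H →ₗ[ℂ] H)) := by
  set S : Submodule ℂ H := LinearMap.range (E : H →ₗ[ℂ] H) with hS
  have hfix : ∀ x : H, x ∈ S ↔ E x = x := by
    intro x
    constructor
    · rintro ⟨y, rfl⟩; exact hidem y
    · intro h; exact ⟨x, h⟩
  -- the closed unit ball of S is compact
  have hK : IsCompact (closure (⇑E '' Metric.closedBall 0 1)) := by
    have := IsCompactOperator.isCompact_closure_image_closedBall
      (f := (E : H →ₗ[ℂ] H)) (by simpa using hc) 1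
    simpa using this
  have hsub : (Subtype.val '' (Metric.closedBall (0 : S) 1))
      ⊆ closure (⇑E '' Metric.closedBall 0 1) := by
    rintro x ⟨⟨y, hy⟩, hy1, rfl⟩
    apply subset_closure
    refine ⟨y, ?_, (hfix y).1 hy⟩
    simpa [Metric.mem_closedBall, dist_eq_norm] using
      (by simpa [Metric.mem_closedBall, dist_eq_norm] using hy1 : ‖(⟨y, hy⟩ : S)‖ ≤ 1)
  have hclosedS : IsClosed (S : Set H) := by
    have : (S : Set H) = {x : H | E x = x} := by
      ext x; exact hfix x
    rw [this]
    exact isClosed_eq E.continuous continuous_id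
  have hclosed : IsClosed (Subtype.val '' (Metric.closedBall (0 : S) 1)) := by
    have : Subtype.val '' (Metric.closedBall (0 : S) 1)
        = (S : Set H) ∩ Metric.closedBall (0 : H) 1 := by
      ext x
      constructor
      · rintro ⟨⟨y, hy⟩, hy1, rfl⟩
        exact ⟨hy, by simpa [Metric.mem_closedBall, dist_eq_norm] using
          (by simpa [Metric.mem_closedBall, dist_eq_norm] using hy1 : ‖(⟨y, hy⟩ : S)‖ ≤ 1)⟩
      · rintro ⟨hxS, hx1⟩
        exact ⟨⟨x, hxS⟩, by simpa [Metric.mem_closedBall, dist_eq_norm] using hx1, rfl⟩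
    rw [this]
    exact hclosedS.inter Metric.isClosed_closedBall
  have hcompact_img : IsCompact (Subtype.val '' (Metric.closedBall (0 : S) 1)) :=
    hK.of_isClosed_subset hclosed hsub
  have hemb : Topology.IsEmbedding (Subtype.val : S → H) := Topology.IsEmbedding.subtypeVal
  have hball : IsCompact (Metric.closedBall (0 : S) 1) := by
    rw [hemb.isCompact_iff]
    exact hcompact_img
  exact FiniteDimensional.of_isCompact_closedBall ℂ one_pos hball

/-- If `P, Q` are orthogonal projections and `P - Q ≥ 0`, then `P ∘ Q = Q`. -/
lemma aux_proj_comp (P Q : H →L[ℂ] H) (hP : IsSelfAdjoint P)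
    (hPi : P ∘L P = P) (hQi : Q ∘L Q = Q) (hpos : (P - Q).IsPositive) :
    P ∘L Q = Q := by
  ext x
  set z := Q x with hz
  have hQz : Q z = z := congrFun (congrArg DFunLike.coe hQi) x
  -- ⟪P z, z⟫ = ⟪P z, P z⟫
  have hadj : ∀ w v : H, ⟪P w, v⟫_ℂ = ⟪w, P v⟫_ℂ := by
    intro w v
    have h := adjoint_inner_left P v w
    rwa [hP.adjoint_eq] at h
  have hPz2 : ⟪P z, z⟫_ℂ = ⟪P z, P z⟫_ℂ := by
    have h0 : ⟪P z, z - P z⟫_ℂ = 0 := by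
      rw [hadj]
      have : P (z - P z) = 0 := by
        rw [map_sub]
        rw [show P (P z) = P z from congrFun (congrArg DFunLike.coe hPi) z]
        simp
      rw [this, inner_zero_right]
    have := inner_sub_right (𝕜 := ℂ) (P z) z (P z)
    rw [h0] at this
    linear_combination -this
  -- from positivity: ‖z‖² ≤ ‖P z‖²
  have hpos' : 0 ≤ Complex.re (⟪(P - Q) z, z⟫_ℂ) := (Complex.nonneg_iff.mp (hpos.inner_nonneg_left z)).1
  have hexp : ⟪(P - Q) z, z⟫_ℂ = ⟪P z, P z⟫_ℂ - ⟪z, z⟫_ℂ := by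
    rw [sub_apply, inner_sub_left, hPz2, hQz]
  rw [hexp] at hpos'
  have hnorm : ‖z‖ ^ 2 ≤ ‖P z‖ ^ 2 := by
    have h1 : Complex.re (⟪P z, P z⟫_ℂ) = ‖P z‖ ^ 2 := by
      have := inner_self_eq_norm_sq (𝕜 := ℂ) (P z)
      simpa [RCLike.re_to_complex] using this
    have h2 : Complex.re (⟪z, z⟫_ℂ) = ‖z‖ ^ 2 := by
      have := inner_self_eq_norm_sq (𝕜 := ℂ) z
      simpa [RCLike.re_to_complex] using this
    simp only [RCLike.re_to_complex, map_sub, Complex.sub_re, h1, h2] at hpos'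
    linarith
  -- Pythagoras: ‖z‖² = ‖P z‖² + ‖z - P z‖²
  have horth : ⟪P z, z - P z⟫_ℂ = 0 := by
    rw [hadj]
    have : P (z - P z) = 0 := by
      rw [map_sub]
      rw [show P (P z) = P z from congrFun (congrArg DFunLike.coe hPi) z]
      simp
    rw [this, inner_zero_right]
  have hpyth : ‖z‖ ^ 2 = ‖P z‖ ^ 2 + ‖z - P z‖ ^ 2 := by
    have hsum : P z + (z - P z) = z := by abel
    have := norm_add_sq (𝕜 := ℂ) (P z) (z - P z)
    rw [horth, hsum] at this
    simp only [map_zero, mul_zero, add_zero, zero_add] at this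
    linarith
  have : ‖z - P z‖ ^ 2 ≤ 0 := by linarith
  have hzero : z - P z = 0 := by
    have := sq_nonneg ‖z - P z‖
    have h0 : ‖z - P z‖ ^ 2 = 0 := le_antisymm ‹‖z - P z‖ ^ 2 ≤ 0› this
    have : ‖z - P z‖ = 0 := by
      nlinarith [norm_nonneg (z - P z)]
    exact norm_eq_zero.mp this
  have : P z = z := by
    have := sub_eq_zero.mp hzero
    exact this.symm
  simpa [comp_apply] using this

end Aux

/-- Let `V₁, V₂` be commuting isometries on a complex Hilbert space,
`V := V₁V₂`, and `C := I − V₁V₁* − V₂V₂* + VV*`. If `C` is compact and semidefinite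
(`C ≥ 0` or `C ≤ 0`), then `C` has finite rank. -/
theorem stmt18 {H : Type*} [NormedAddCommGroup H] [InnerProductSpace ℂ H] [CompleteSpace H]
    (V₁ V₂ : H →L[ℂ] H)
    (hV₁ : adjoint V₁ ∘L V₁ = 1) (hV₂ : adjoint V₂ ∘L V₂ = 1)
    (hcomm : V₁ ∘L V₂ = V₂ ∘L V₁)
    (C : H →L[ℂ] H)
    (hC : C = 1 - V₁ ∘L adjoint V₁ - V₂ ∘L adjoint V₂
        + (V₁ ∘L V₂) ∘L adjoint (V₁ ∘L V₂))
    (hcompact : IsCompactOperator ⇑C)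
    (hsemi : C.IsPositive ∨ (-C).IsPositive) :
    FiniteDimensional ℂ ↥(LinearMap.range (C : H →ₗ[ℂ] H)) := by
  -- D = I - V₁V₁* and Q = V₂ D V₂* are orthogonal projections and C = D - Q
  set D : H →L[ℂ] H := 1 - V₁ ∘L adjoint V₁ with hD
  set Q : H →L[ℂ] H := V₂ ∘L D ∘L adjoint V₂ with hQ
  have hV₁' : adjoint V₁ * V₁ = 1 := hV₁
  have hV₂' : adjoint V₂ * V₂ = 1 := hV₂
  have hDmul : D = 1 - V₁ * adjoint V₁ := hD
  have hQmul : Q = V₂ * (D * adjoint V₂) := hQ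
  have hCDQ : C = D - Q := by
    rw [hC, hcomm, adjoint_comp, hQ, hD]
    simp only [← mul_def]
    noncomm_ring
  have hDidem : D * D = D := by
    rw [hDmul]
    have hA : (V₁ * adjoint V₁) * (V₁ * adjoint V₁) = V₁ * adjoint V₁ := by
      rw [mul_assoc, ← mul_assoc (adjoint V₁), hV₁', one_mul]
    have : (1 - V₁ * adjoint V₁) * (1 - V₁ * adjoint V₁)
        = 1 - V₁ * adjoint V₁ - V₁ * adjoint V₁
          + (V₁ * adjoint V₁) * (V₁ * adjoint V₁) := by noncomm_ring
    rw [this, hA]; abel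
  have hQidem : Q * Q = Q := by
    rw [hQmul]
    calc V₂ * (D * adjoint V₂) * (V₂ * (D * adjoint V₂))
        = V₂ * (D * ((adjoint V₂ * V₂) * (D * adjoint V₂))) := by noncomm_ring
      _ = V₂ * (D * (D * adjoint V₂)) := by rw [hV₂', one_mul]
      _ = V₂ * ((D * D) * adjoint V₂) := by noncomm_ring
      _ = V₂ * (D * adjoint V₂) := by rw [hDidem]
  have hDsa : IsSelfAdjoint D := by
    rw [IsSelfAdjoint, hDmul, ← star_eq_adjoint]
    simp [star_sub, star_mul, star_one]
  have hQsa : IsSelfAdjoint Q := by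
    rw [IsSelfAdjoint, hQmul, ← star_eq_adjoint]
    rw [star_mul, star_mul, star_star, hDsa.star_eq]
    noncomm_ring
  have hDidem' : D ∘L D = D := hDidem
  have hQidem' : Q ∘L Q = Q := hQidem
  rcases hsemi with hpos | hneg
  · -- C ≥ 0 : D - Q ≥ 0, so C = D - Q is a projection
    have hpos' : (D - Q).IsPositive := hCDQ ▸ hpos
    have hPQ : D ∘L Q = Q := aux_proj_comp D Q hDsa hDidem' hQidem' hpos'
    have hQP : Q ∘L D = Q := by
      have := congrArg star hPQ
      rw [show (D ∘L Q) = D * Q from rfl, star_mul, hDsa.star_eq, hQsa.star_eq] at this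
      exact this
    have hidem : C * C = C := by
      rw [hCDQ]
      have : (D - Q) * (D - Q) = D * D - D * Q - Q * D + Q * Q := by noncomm_ring
      rw [this, hDidem, hQidem, show D * Q = Q from hPQ, show Q * D = Q from hQP]
      abel
    exact aux_finrank_of_compact_idem C hcompact
      (fun x => congrFun (congrArg DFunLike.coe hidem) x)
  · -- C ≤ 0 : Q - D ≥ 0, so -C = Q - D is a projection
    have hneg' : (Q - D).IsPositive := by
      have : -C = Q - D := by rw [hCDQ]; abel
      exact this ▸ hneg
    have hPQ : Q ∘L D = D := aux_proj_comp Q D hQsa hQidem' hDidem' hneg'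
    have hQP : D ∘L Q = D := by
      have := congrArg star hPQ
      rw [show (Q ∘L D) = Q * D from rfl, star_mul, hDsa.star_eq, hQsa.star_eq] at this
      exact this
    have hidem : (-C) * (-C) = -C := by
      have hmc : -C = Q - D := by rw [hCDQ]; abel
      rw [hmc]
      have : (Q - D) * (Q - D) = Q * Q - Q * D - D * Q + D * D := by noncomm_ring
      rw [this, hDidem, hQidem, show Q * D = D from hPQ, show D * Q = D from hQP]
      abel
    have hrange : LinearMap.range (C : H →ₗ[ℂ] H) = LinearMap.range ((-C : H →L[ℂ] H) : H →ₗ[ℂ] H) := by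
      ext x
      constructor
      · rintro ⟨y, rfl⟩; exact ⟨-y, by simp⟩
      · rintro ⟨y, rfl⟩; exact ⟨-y, by simp⟩
    rw [hrange]
    exact aux_finrank_of_compact_idem (-C) hcompact.neg
      (fun x => congrFun (congrArg DFunLike.coe hidem) x)
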